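/- (Finite-breakpoint attainment of the dual supremum, correctness core of Algorithm 1) Assume R ≥ Σ_{x∈𝒳} min_{m∈ℳ_x} R_x(m). Let Λ ⊆ ℝ be the finite set consisting of 0 together with all nonnegative real numbers of the form (D_x(m) − D_x(m′))/(R_x(m′) − R_x(m)) over x ∈ 𝒳 and m, m′ ∈ ℳ_x with R_x(m) ≠ R_x(m′). Then sup_{λ ≥ 0} g(λ) = max_{λ ∈ Λ} g(λ); in particular the supremum of the dual objective over λ ≥ 0 is attained at a point of the finite set Λ. -/

import Mathlib

/-- If an affine function `a + s*b` is negative at `t` and nonnegative at `u`,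
then `b ≠ 0`, the root `-a/b` is a genuine root, and it lies between `t` and `u`. -/
private lemma cross_aux {a b t u : ℝ} (ht : a + t * b < 0) (hu : 0 ≤ a + u * b) :
    b ≠ 0 ∧ a + (-a / b) * b = 0 ∧
      (t < u → t < -a / b ∧ -a / b ≤ u) ∧ (u < t → u ≤ -a / b ∧ -a / b < t) := by
  have hb : b ≠ 0 := by
    rintro rfl
    simp only [mul_zero, add_zero] at ht hu
    linarith
  have hroot : a + (-a / b) * b = 0 := by field_simp; ring
  set c : ℝ := -a / b with hc
  refine ⟨hb, hroot, ?_, ?_⟩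
  · intro htu
    have hbpos : 0 < b := by
      rcases lt_trichotomy b 0 with h | h | h
      · nlinarith
      · exact absurd h hb
      · exact h
    constructor
    · have h1 : t * b < c * b := by linarith
      exact lt_of_mul_lt_mul_right h1 hbpos.le
    · have h1 : c * b ≤ u * b := by linarith
      exact le_of_mul_le_mul_right h1 hbpos
  · intro hut
    have hbneg : b < 0 := by
      rcases lt_trichotomy b 0 with h | h | h
      · exact h
      · exact absurd h hb
      · nlinarith
    constructor
    · have h1 : u * -b ≤ c * -b := by
        have e1 : u * -b = -(u * b) := by ring
        have e2 : c * -b = -(c * b) := by ring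
        rw [e1, e2]; linarith
      exact le_of_mul_le_mul_right h1 (by linarith)
    · have h1 : c * -b < t * -b := by
        have e1 : t * -b = -(t * b) := by ring
        have e2 : c * -b = -(c * b) := by ring
        rw [e1, e2]; linarith
      exact lt_of_mul_lt_mul_right h1 (by linarith)

/-- Finite-breakpoint attainment of the dual supremum (correctness core of
Algorithm 1): for feasible rate `R`, the supremum over `λ ≥ 0` of the dual
objective `g` is attained at a point of the finite set `Λ` consisting of `0`
together with all nonnegative slopes `(D_x(m) - D_x(m'))/(R_x(m') - R_x(m))`,
and equals the maximum of `g` over `Λ`. -/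
theorem dual_sup_attained_on_breakpoints
    (X : Type) [Fintype X] [Nonempty X]
    (M : X → Type) [∀ x, Fintype (M x)] [∀ x, Nonempty (M x)]
    (D Rf : (x : X) → M x → ℝ)
    (hD : ∀ x m, 0 ≤ D x m) (hRf : ∀ x m, 0 ≤ Rf x m)
    (R : ℝ)
    (hR : R ≥ ∑ x, Finset.univ.inf' Finset.univ_nonempty (Rf x))
    (g : ℝ → ℝ)
    (hg : ∀ l, g l = -l * R + ∑ x, Finset.univ.inf' Finset.univ_nonempty
        (fun m => D x m + l * Rf x m))
    (Λ : Set ℝ)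
    (hΛ : Λ = {0} ∪ { l : ℝ | 0 ≤ l ∧ ∃ x : X, ∃ m m' : M x,
        Rf x m ≠ Rf x m' ∧ l = (D x m - D x m') / (Rf x m' - Rf x m) }) :
    ∃ l₀ ∈ Λ, (∀ l ∈ Λ, g l ≤ g l₀) ∧
      sSup { v : ℝ | ∃ l : ℝ, 0 ≤ l ∧ v = g l } = g l₀ := by
  classical
  have hΛ0 : (0 : ℝ) ∈ Λ := by rw [hΛ]; exact Or.inl rfl
  have hΛnonneg : ∀ l ∈ Λ, 0 ≤ l := by
    intro l hl
    rw [hΛ] at hl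
    rcases hl with h | h
    · simp only [Set.mem_singleton_iff] at h; simp [h]
    · exact h.1
  have hΛfin : Λ.Finite := by
    have hsub : Λ ⊆ {0} ∪ Set.range (fun p : Σ x : X, M x × M x =>
        (D p.1 p.2.1 - D p.1 p.2.2) / (Rf p.1 p.2.2 - Rf p.1 p.2.1)) := by
      rw [hΛ]
      rintro l (h | ⟨h0, x, m, m', hne, rfl⟩)
      · exact Or.inl h
      · exact Or.inr ⟨⟨x, m, m'⟩, rfl⟩
    exact ((Set.finite_singleton 0).union (Set.finite_range _)).subset hsub
  -- the key lemma: from any λ ≥ 0 we can move to a breakpoint without decreasing g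
  have key : ∀ l : ℝ, 0 ≤ l → ∃ μ ∈ Λ, g l ≤ g μ := by
    intro l hl
    -- choose minimizers at l
    choose mx hmxmem hmx using fun x : X =>
      Finset.exists_min_image Finset.univ (fun m => D x m + l * Rf x m) Finset.univ_nonempty
    set A : ℝ → ℝ := fun t => -t * R + ∑ x, (D x (mx x) + t * Rf x (mx x)) with hA
    have hAaff : ∀ t u : ℝ, A u - A t = (u - t) * ((∑ x, Rf x (mx x)) - R) := by
      intro t u
      simp only [hA, Finset.sum_add_distrib, ← Finset.mul_sum]
      ring
    have hAl : g l = A l := by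
      rw [hg, hA]
      congr 1
      refine Finset.sum_congr rfl fun x _ => ?_
      exact le_antisymm (Finset.inf'_le _ (Finset.mem_univ _))
        (Finset.le_inf' _ _ fun m hm => hmx x m hm)
    have hAge : ∀ μ : ℝ,
        (∀ x, ∀ m, D x (mx x) + μ * Rf x (mx x) ≤ D x m + μ * Rf x m) → A μ ≤ g μ := by
      intro μ hμ
      rw [hg, hA]
      refine add_le_add (le_refl _) (Finset.sum_le_sum fun x _ => ?_)
      exact Finset.le_inf' _ _ fun m _ => hμ x m
    -- crossing into Λ
    have crossΛ : ∀ (x : X) (m : M x) (t : ℝ), 0 ≤ t →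
        D x m + t * Rf x m < D x (mx x) + t * Rf x (mx x) →
        ∃ c ∈ Λ, (t < l → t < c ∧ c ≤ l) ∧ (l < t → l ≤ c ∧ c < t) := by
      intro x m t ht hlt
      set a : ℝ := D x m - D x (mx x) with ha
      set b : ℝ := Rf x m - Rf x (mx x) with hb
      have h1 : a + t * b < 0 := by simp only [ha, hb]; nlinarith [hlt]
      have h2 : 0 ≤ a + l * b := by
        have := hmx x m (Finset.mem_univ m)
        simp only [ha, hb]; nlinarith [this]
      obtain ⟨hbne, hroot, hcase1, hcase2⟩ := cross_aux h1 h2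
      have htl : t ≠ l := by
        rintro rfl; linarith
      have hc0 : 0 ≤ -a / b := by
        rcases lt_or_gt_of_ne htl with h | h
        · have := (hcase1 h).1; linarith
        · have := (hcase2 h).1; linarith
      have hmem : -a / b ∈ Λ := by
        rw [hΛ]
        refine Or.inr ⟨hc0, x, mx x, m, ?_, ?_⟩
        · intro heq
          apply hbne
          simp only [hb, heq, sub_self]
        · rw [ha, hb, neg_sub]
      exact ⟨-a / b, hmem, hcase1, hcase2⟩
    rcases le_or_gt (∑ x, Rf x (mx x)) R with hs | hs
    · -- nonpositive slope: move left to the largest breakpoint ≤ l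
      have hfin : (Λ ∩ Set.Icc 0 l).Finite := hΛfin.inter_of_left _
      have hne : (Λ ∩ Set.Icc 0 l).Nonempty := ⟨0, hΛ0, le_refl 0, hl⟩
      obtain ⟨μ, hμS, hμmax⟩ := Set.exists_max_image _ id hfin hne
      refine ⟨μ, hμS.1, ?_⟩
      have hμ0 : 0 ≤ μ := hμS.2.1
      have hμl : μ ≤ l := hμS.2.2
      have hopt : ∀ x, ∀ m, D x (mx x) + μ * Rf x (mx x) ≤ D x m + μ * Rf x m := by
        by_contra h
        push_neg at h
        obtain ⟨x, m, hlt⟩ := h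
        obtain ⟨c, hcΛ, hc1, hc2⟩ := crossΛ x m μ hμ0 hlt
        rcases lt_trichotomy μ l with h1 | h1 | h1
        · obtain ⟨hc3, hc4⟩ := hc1 h1
          have hcle : id c ≤ id μ := hμmax c ⟨hcΛ, by linarith, hc4⟩
          simp only [id] at hcle
          linarith
        · subst h1
          have := hmx x m (Finset.mem_univ m)
          linarith
        · linarith
      have h2 : A l ≤ A μ := by
        have h3 := hAaff l μ
        nlinarith [mul_nonneg (sub_nonneg.2 hμl) (sub_nonneg.2 hs)]
      have h4 := hAge μ hopt
      linarith [hAl]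
    · -- positive slope: move right to the smallest breakpoint in [l, T]
      choose my hmymem hmy using fun x : X =>
        Finset.exists_min_image Finset.univ (fun m => Rf x m) Finset.univ_nonempty
      have hRσ : (∑ x, Rf x (my x)) ≤ R := by
        refine le_trans (Finset.sum_le_sum fun x _ => ?_) hR
        exact Finset.le_inf' _ _ fun m hm => hmy x m hm
      set C : ℝ := ∑ x, D x (my x) with hC
      have hbound : ∀ t : ℝ, 0 ≤ t → g t ≤ C := by
        intro t ht
        rw [hg]
        have h1 : (∑ x, Finset.univ.inf' Finset.univ_nonempty
            (fun m => D x m + t * Rf x m)) ≤ ∑ x, (D x (my x) + t * Rf x (my x)) :=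
          Finset.sum_le_sum fun x _ => Finset.inf'_le _ (Finset.mem_univ _)
        have h2 : (∑ x, (D x (my x) + t * Rf x (my x)))
            = C + t * (∑ x, Rf x (my x)) := by
          rw [Finset.sum_add_distrib, ← Finset.mul_sum, hC]
        nlinarith [mul_nonneg ht (sub_nonneg.2 hRσ)]
      set s : ℝ := (∑ x, Rf x (mx x)) - R with hsdef
      have hspos : 0 < s := by simp only [hsdef]; linarith
      have hCA : A l ≤ C := by rw [← hAl]; exact hbound l hl
      set T : ℝ := l + (C - A l) / s + 1 with hT
      have hlT : l < T := by
        have : 0 ≤ (C - A l) / s := div_nonneg (by linarith) hspos.le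
        rw [hT]; linarith
      have hT0 : 0 ≤ T := le_trans hl hlT.le
      have hAT : C < A T := by
        have h3 := hAaff l T
        have h4 : (T - l) * s = (C - A l) + s := by
          rw [hT]
          field_simp
          ring
        linarith
      have hTex : ∃ x, ∃ m : M x,
          D x m + T * Rf x m < D x (mx x) + T * Rf x (mx x) := by
        by_contra h
        push_neg at h
        have h5 := hAge T h
        have h6 := hbound T hT0
        linarith
      obtain ⟨x₀, m₀, hx₀⟩ := hTex
      obtain ⟨c₀, hc₀Λ, _, hc₀2⟩ := crossΛ x₀ m₀ T hT0 hx₀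
      obtain ⟨hc₀l, hc₀T⟩ := hc₀2 hlT
      have hfin : (Λ ∩ Set.Icc l T).Finite := hΛfin.inter_of_left _
      have hne : (Λ ∩ Set.Icc l T).Nonempty := ⟨c₀, hc₀Λ, hc₀l, hc₀T.le⟩
      obtain ⟨μ, hμS, hμmin⟩ := Set.exists_max_image _ (fun t => -t) hfin hne
      have hμmin' : ∀ c ∈ Λ ∩ Set.Icc l T, μ ≤ c := by
        intro c hc
        have := hμmin c hc
        simp only [neg_le_neg_iff] at this
        linarith [this]
      refine ⟨μ, hμS.1, ?_⟩
      have hlμ : l ≤ μ := hμS.2.1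
      have hμT : μ ≤ T := hμS.2.2
      have hμ0 : 0 ≤ μ := le_trans hl hlμ
      have hopt : ∀ x, ∀ m, D x (mx x) + μ * Rf x (mx x) ≤ D x m + μ * Rf x m := by
        by_contra h
        push_neg at h
        obtain ⟨x, m, hlt⟩ := h
        obtain ⟨c, hcΛ, hc1, hc2⟩ := crossΛ x m μ hμ0 hlt
        rcases lt_trichotomy l μ with h1 | h1 | h1
        · obtain ⟨hc3, hc4⟩ := hc2 h1
          have := hμmin' c ⟨hcΛ, hc3, by linarith⟩
          linarith
        · subst h1
          have := hmx x m (Finset.mem_univ m)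
          linarith
        · linarith
      have h2 : A l ≤ A μ := by
        have h3 := hAaff l μ
        nlinarith [mul_nonneg (sub_nonneg.2 hlμ) hspos.le]
      have h4 := hAge μ hopt
      linarith [hAl]
  -- conclude
  obtain ⟨l₀, hl₀Λ, hmax⟩ := Set.exists_max_image Λ g hΛfin ⟨0, hΛ0⟩
  have hub : ∀ v ∈ { v : ℝ | ∃ l : ℝ, 0 ≤ l ∧ v = g l }, v ≤ g l₀ := by
    rintro v ⟨l, hl, rfl⟩
    obtain ⟨μ, hμ, hle⟩ := key l hl
    exact hle.trans (hmax μ hμ)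
  refine ⟨l₀, hl₀Λ, hmax, ?_⟩
  have hmem : g l₀ ∈ { v : ℝ | ∃ l : ℝ, 0 ≤ l ∧ v = g l } :=
    ⟨l₀, hΛnonneg l₀ hl₀Λ, rfl⟩
  exact le_antisymm (csSup_le ⟨g l₀, hmem⟩ hub) (le_csSup ⟨g l₀, hub⟩ hmem)
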